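/- Let n be a positive integer and let χ : E(K_n) → Z_3 be an edge-coloring containing no alternating 4-cycle, i.e., for every 4-cycle uvwz one has χ(uv) + χ(wz) = χ(vw) + χ(zu). Then χ is a CC coloring: the vertex set of K_n can be partitioned into three (possibly empty) sets V_0, V_1, V_2 such that, for every i ∈ Z_3, every edge inside V_i has color i, and every edge joining V_{i+1} and V_{i+2} (indices mod 3) has color i. -/
import Mathlib


open Finset

lemma t1 : ∀ a b c : ZMod 3, a = 2*(a+b-c) + 2*(a+c-b) := by decide
lemma s1 : ∀ a b c : ZMod 3, b = 2*(a+b-c) + 2*(b+c-a) := by decide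
lemma s2 : ∀ a b c : ZMod 3, c = 2*(a+c-b) + 2*(b+c-a) := by decide
lemma t2 : ∀ c01 c02 c12 x0 x1 : ZMod 3, c02 + x1 = x0 + c12 →
    x0 = 2*(c01+c02-c12) + 2*(x0+x1-c01) := by decide
lemma t3 : ∀ c01 c02 c12 x0 x1 : ZMod 3, c12 + x0 = x1 + c02 →
    x1 = 2*(c01+c12-c02) + 2*(x0+x1-c01) := by decide
lemma t4 : ∀ c01 c02 c12 x0 x1 x2 : ZMod 3, c02 + x1 = x0 + c12 → c02 + x1 = x2 + c01 →
    x2 = 2*(c02+c12-c01) + 2*(x0+x1-c01) := by decide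
lemma t5 : ∀ c01 y0 y1 x0 x1 w : ZMod 3, y0 + x1 = x0 + y1 → x0 + y1 = w + c01 →
    w = 2*(y0+y1-c01) + 2*(x0+x1-c01) := by decide
lemma nodup4 {α} [DecidableEq α] {a b c d : α} (h1 : a≠b) (h2 : a≠c) (h3 : a≠d)
    (h4 : b≠c) (h5 : b≠d) (h6 : c≠d) : [a,b,c,d].Nodup := by
  simp [h1,h2,h3,h4,h5,h6]

lemma aux3 (m : ℕ) (χ : Sym2 (Fin (m+3)) → ZMod 3)
    (hnoalt : ∀ u v w z : Fin (m+3), ([u, v, w, z] : List (Fin (m+3))).Nodup →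
      χ s(u, v) + χ s(w, z) = χ s(v, w) + χ s(z, u)) :
    ∃ Q : Fin (m+3) → ZMod 3, ∀ u v : Fin (m+3), u ≠ v → χ s(u,v) = Q u + Q v := by
  have esw : ∀ a b : Fin (m+3), χ s(a,b) = χ s(b,a) := fun a b => by rw [Sym2.eq_swap]
  set z0 : Fin (m+3) := ⟨0, by omega⟩ with hz0
  set z1 : Fin (m+3) := ⟨1, by omega⟩ with hz1
  set z2 : Fin (m+3) := ⟨2, by omega⟩ with hz2
  have h01 : z0 ≠ z1 := by simp [hz0, hz1, Fin.ext_iff]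
  have h02 : z0 ≠ z2 := by simp [hz0, hz2, Fin.ext_iff]
  have h12 : z1 ≠ z2 := by simp [hz1, hz2, Fin.ext_iff]
  refine ⟨fun u => if u = z0 then 2*(χ s(z0,z1)+χ s(z0,z2)-χ s(z1,z2))
    else if u = z1 then 2*(χ s(z0,z1)+χ s(z1,z2)-χ s(z0,z2))
    else if u = z2 then 2*(χ s(z0,z2)+χ s(z1,z2)-χ s(z0,z1))
    else 2*(χ s(z0,u)+χ s(z1,u)-χ s(z0,z1)), ?_⟩
  have key0 : ∀ w : Fin (m+3), w ≠ z0 → w ≠ z1 → w ≠ z2 →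
      χ s(z0,w) = 2*(χ s(z0,z1)+χ s(z0,z2)-χ s(z1,z2))
        + 2*(χ s(z0,w)+χ s(z1,w)-χ s(z0,z1)) := by
    intro w w0 w1 w2
    have h := hnoalt z2 z0 w z1 (nodup4 h02.symm w2.symm h12.symm w0.symm h01 w1)
    rw [esw z2 z0, esw w z1] at h
    exact t2 _ _ _ _ _ h
  have key1 : ∀ w : Fin (m+3), w ≠ z0 → w ≠ z1 → w ≠ z2 →
      χ s(z1,w) = 2*(χ s(z0,z1)+χ s(z1,z2)-χ s(z0,z2))
        + 2*(χ s(z0,w)+χ s(z1,w)-χ s(z0,z1)) := by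
    intro w w0 w1 w2
    have h := hnoalt z2 z1 w z0 (nodup4 h12.symm w2.symm h02.symm w1.symm h01.symm w0)
    rw [esw z2 z1, esw w z0] at h
    exact t3 _ _ _ _ _ h
  have key2 : ∀ w : Fin (m+3), w ≠ z0 → w ≠ z1 → w ≠ z2 →
      χ s(z2,w) = 2*(χ s(z0,z2)+χ s(z1,z2)-χ s(z0,z1))
        + 2*(χ s(z0,w)+χ s(z1,w)-χ s(z0,z1)) := by
    intro w w0 w1 w2
    have h1 := hnoalt z2 z0 w z1 (nodup4 h02.symm w2.symm h12.symm w0.symm h01 w1)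
    rw [esw z2 z0, esw w z1] at h1
    have h2 := hnoalt z0 z2 w z1 (nodup4 h02 w0.symm h01 w2.symm h12.symm w1)
    rw [esw w z1, esw z1 z0] at h2
    exact t4 _ _ _ _ _ _ h1 h2
  have keyg : ∀ u v : Fin (m+3), u ≠ v → u ≠ z0 → u ≠ z1 → u ≠ z2 →
      v ≠ z0 → v ≠ z1 → v ≠ z2 →
      χ s(u,v) = 2*(χ s(z0,u)+χ s(z1,u)-χ s(z0,z1))
        + 2*(χ s(z0,v)+χ s(z1,v)-χ s(z0,z1)) := by
    intro u v huv u0 u1 u2 v0 v1 v2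
    have h1 := hnoalt u z0 v z1 (nodup4 u0 huv u1 v0.symm h01 v1)
    rw [esw u z0, esw v z1] at h1
    have h2 := hnoalt z0 v u z1 (nodup4 v0.symm u0.symm h01 (fun h => huv h.symm) v1 u1)
    rw [esw u z1, esw v u, esw z1 z0] at h2
    exact t5 _ _ _ _ _ _ h1 h2
  intro u v huv
  by_cases hu0 : u = z0
  · subst hu0
    by_cases hv1 : v = z1
    · subst hv1; simp only [if_neg h01.symm, reduceIte]; exact t1 _ _ _
    by_cases hv2 : v = z2
    · subst hv2; simp only [if_neg h02.symm, if_neg h12.symm, reduceIte]; exact s1 _ _ _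
    · simp only [if_neg (Ne.symm huv), if_neg hv1, if_neg hv2, reduceIte]
      exact key0 v (Ne.symm huv) hv1 hv2
  by_cases hu1 : u = z1
  · subst hu1
    by_cases hv0 : v = z0
    · subst hv0; simp only [if_neg hu0, reduceIte]
      exact (esw z1 z0).trans ((t1 _ _ _).trans (add_comm _ _))
    by_cases hv2 : v = z2
    · subst hv2; simp only [if_neg hu0, if_neg hv0, if_neg h12.symm, reduceIte]
      exact s2 _ _ _
    · simp only [if_neg hu0, if_neg hv0, if_neg (Ne.symm huv), if_neg hv2, reduceIte]
      exact key1 v hv0 (Ne.symm huv) hv2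
  by_cases hu2 : u = z2
  · subst hu2
    by_cases hv0 : v = z0
    · subst hv0; simp only [if_neg hu0, if_neg hu1, reduceIte]
      exact (esw z2 z0).trans ((s1 _ _ _).trans (add_comm _ _))
    by_cases hv1 : v = z1
    · subst hv1; simp only [if_neg hu0, if_neg hu1, if_neg hv0, reduceIte]
      exact (esw z2 z1).trans ((s2 _ _ _).trans (add_comm _ _))
    · simp only [if_neg hu0, if_neg hu1, if_neg hv0, if_neg hv1,
        if_neg (Ne.symm huv), reduceIte]
      exact key2 v hv0 hv1 (Ne.symm huv)
  · by_cases hv0 : v = z0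
    · subst hv0; simp only [if_neg hu0, if_neg hu1, if_neg hu2, reduceIte]
      exact (esw u z0).trans ((key0 u hu0 hu1 hu2).trans (add_comm _ _))
    by_cases hv1 : v = z1
    · subst hv1; simp only [if_neg hu0, if_neg hu1, if_neg hu2, if_neg hv0, reduceIte]
      exact (esw u z1).trans ((key1 u hu0 hu1 hu2).trans (add_comm _ _))
    by_cases hv2 : v = z2
    · subst hv2
      simp only [if_neg hu0, if_neg hu1, if_neg hu2, if_neg hv0, if_neg hv1, reduceIte]
      exact (esw u z2).trans ((key2 u hu0 hu1 hu2).trans (add_comm _ _))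
    · simp only [if_neg hu0, if_neg hu1, if_neg hu2, if_neg hv0, if_neg hv1, if_neg hv2]
      exact keyg u v huv hu0 hu1 hu2 hv0 hv1 hv2

lemma zmod3_cc : ∀ p q x : ZMod 3, x = -(p + q) →
    ((p = q ∧ x = p) ∨ (p ≠ q ∧ x ≠ p ∧ x ≠ q)) := by decide


/-- `χ` is a CC ("clique classes") coloring of the complete graph on `Fin N`:
there is a partition of the vertices into classes `V₀, V₁, V₂` (given by the
class-assignment map `P`) such that every edge inside a class `Vᵢ` has color `i`,
and every edge joining two distinct classes `Vⱼ, Vₖ` has the third color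
(the color `i ∉ {j, k}`). -/
def IsCCColoring {N : ℕ} (χ : Sym2 (Fin N) → ZMod 3) : Prop :=
  ∃ P : Fin N → ZMod 3, ∀ u v : Fin N, u ≠ v →
    ((P u = P v ∧ χ s(u, v) = P u) ∨
      (P u ≠ P v ∧ χ s(u, v) ≠ P u ∧ χ s(u, v) ≠ P v))

theorem stmt6 (n : ℕ) (hn : 0 < n) (χ : Sym2 (Fin n) → ZMod 3)
    (hnoalt : ∀ u v w z : Fin n, ([u, v, w, z] : List (Fin n)).Nodup →
      χ s(u, v) + χ s(w, z) = χ s(v, w) + χ s(z, u)) :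
    IsCCColoring χ := by
  have main : ∃ Q : Fin n → ZMod 3, ∀ u v : Fin n, u ≠ v → χ s(u,v) = Q u + Q v := by
    match n, hn, χ, hnoalt with
    | 1, _, χ, _ =>
      exact ⟨fun _ => 0, fun u v huv => absurd (Subsingleton.elim u v) huv⟩
    | 2, _, χ, _ =>
      refine ⟨fun u => if u = 0 then 0 else χ s(0,1), fun u v huv => ?_⟩
      fin_cases u <;> fin_cases v <;> simp_all
      rw [show s((1:Fin 2),(0:Fin 2)) = s(0,1) from Sym2.eq_swap]
    | (m+3), _, χ, hnoalt => exact aux3 m χ hnoalt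
  obtain ⟨Q, hQ⟩ := main
  refine ⟨fun u => -(Q u), fun u v huv => ?_⟩
  refine zmod3_cc _ _ _ ?_
  rw [hQ u v huv]; ring
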